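/- Let n ≥ 1 and let α₁, …, αₙ be distinct positive even integers. If k = (k₁, …, kₙ) ∈ ℝⁿ and K = diag(k₁, …, kₙ) satisfy det(s·Iₙ − K·B^{−1}) = ∏_{i=1}^n (s − (αᵢ² − 1)^{−1}) as polynomials in s, then 0 < kᵢ < 1 for every i = 1, …, n. -/

import Mathlib

open Matrix Polynomial

noncomputable section

/-- The `n × n` tridiagonal matrix `B` of the Marx generator. -/
def marxB (n : ℕ) : Matrix (Fin n) (Fin n) ℝ :=
  Matrix.of fun i j =>
    if i = j then (if (i : ℕ) = n - 1 then ((n : ℝ) + 1) / n else 2)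
    else if (i : ℕ) + 1 = (j : ℕ) ∨ (j : ℕ) + 1 = (i : ℕ) then -1 else 0

/-- Lower bidiagonal Cholesky-like factor of `marxB`. -/
def marxC (n : ℕ) : Matrix (Fin n) (Fin n) ℝ :=
  Matrix.of fun l i => if (l : ℕ) = (i : ℕ) then 1 else if (l : ℕ) = (i : ℕ) + 1 then -1 else 0

def marxd (n : ℕ) : Fin n → ℝ := fun i => if (i : ℕ) = n - 1 then 1 / n else 0

lemma sum_indicator {n : ℕ} (c : ℕ) (g : Fin n → ℝ) :
    (∑ l : Fin n, if (l : ℕ) = c then g l else 0) = if h : c < n then g ⟨c, h⟩ else 0 := by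
  split
  · next h =>
    calc (∑ l : Fin n, if (l : ℕ) = c then g l else 0)
        = ∑ l : Fin n, if l = (⟨c, h⟩ : Fin n) then g l else 0 := by
          refine Finset.sum_congr rfl fun l _ => ?_
          simp [Fin.ext_iff]
      _ = g ⟨c, h⟩ := by rw [Finset.sum_ite_eq']; simp
  · next h =>
    refine Finset.sum_eq_zero fun l _ => ?_
    have := l.isLt
    rw [if_neg]; omega

lemma marxB_eq (n : ℕ) (hn : 1 ≤ n) :
    marxB n = (marxC n)ᴴ * marxC n + Matrix.diagonal (marxd n) := by
  have hn0 : (n : ℝ) ≠ 0 := by positivity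
  ext i j
  have hsum : ((marxC n)ᴴ * marxC n) i j
      = marxC n i j + (if h : (i : ℕ) + 1 < n then -(marxC n ⟨(i : ℕ) + 1, h⟩ j) else 0) := by
    rw [Matrix.mul_apply]
    have : ∀ l : Fin n, (marxC n)ᴴ i l * marxC n l j
        = (if (l : ℕ) = (i : ℕ) then marxC n l j else 0)
          + (if (l : ℕ) = (i : ℕ) + 1 then -(marxC n l j) else 0) := by
      intro l
      simp only [Matrix.conjTranspose_apply, marxC, Matrix.of_apply, star_trivial]
      rcases eq_or_ne (l : ℕ) (i : ℕ) with h1 | h1 <;>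
        rcases eq_or_ne (l : ℕ) ((i : ℕ) + 1) with h2 | h2
      · exfalso; omega
      all_goals simp [h1, h2]
      all_goals split_ifs <;> norm_num
    rw [Finset.sum_congr rfl fun l _ => this l, Finset.sum_add_distrib,
      sum_indicator (i : ℕ) (fun l => marxC n l j),
      sum_indicator ((i : ℕ) + 1) (fun l => -(marxC n l j))]
    rw [dif_pos i.isLt]
    try simp
  rw [Matrix.add_apply, hsum]
  simp only [marxB, marxC, marxd, Matrix.of_apply, Matrix.diagonal_apply, Fin.ext_iff,
    Fin.val_mk]
  have hi := i.isLt
  have hj := j.isLt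
  split_ifs <;> first
    | (exfalso; omega)
    | (norm_num; done)
    | (field_simp; try ring; done)

lemma marxC_det (n : ℕ) : (marxC n).det = 1 := by
  rw [Matrix.det_of_lowerTriangular (marxC n)]
  · refine Finset.prod_eq_one fun i _ => ?_
    simp [marxC]
  · intro i j h
    simp only [OrderDual.toDual_lt_toDual] at h
    have : (i : ℕ) < (j : ℕ) := h
    simp only [marxC, Matrix.of_apply]
    rw [if_neg (by omega), if_neg (by omega)]

lemma marxC_isUnit (n : ℕ) : IsUnit (marxC n) :=
  (Matrix.isUnit_iff_isUnit_det _).mpr (by simp [marxC_det])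

lemma posDef_conjTranspose_mul_self' {m : Type*} [Fintype m] [DecidableEq m]
    (C : Matrix m m ℝ) (h : IsUnit C) : (Cᴴ * C).PosDef := by
  refine Matrix.PosDef.of_dotProduct_mulVec_pos (Matrix.isHermitian_conjTranspose_mul_self C) fun x hx => ?_
  have hinj : Function.Injective C.mulVec := Matrix.mulVec_injective_iff_isUnit.mpr h
  have hCx : C *ᵥ x ≠ 0 := by
    intro h0
    exact hx (hinj (by simp [h0]))
  have : star x ⬝ᵥ ((Cᴴ * C) *ᵥ x) = star (C *ᵥ x) ⬝ᵥ (C *ᵥ x) := by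
    rw [← Matrix.mulVec_mulVec, Matrix.dotProduct_mulVec, Matrix.star_mulVec]
  rw [this]
  exact Matrix.dotProduct_star_self_pos_iff.mpr hCx

lemma marxB_posDef (n : ℕ) (hn : 1 ≤ n) : (marxB n).PosDef := by
  rw [marxB_eq n hn]
  refine (posDef_conjTranspose_mul_self' _ (marxC_isUnit n)).add_posSemidef
    (Matrix.posSemidef_diagonal_iff.mpr fun i => ?_)
  unfold marxd
  split_ifs <;> positivity

lemma eval_charpoly_eq {m : ℕ} (A : Matrix (Fin m) (Fin m) ℝ) (μ : ℝ) :
    (A.charpoly).eval μ = (μ • (1 : Matrix (Fin m) (Fin m) ℝ) - A).det := by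
  rw [Matrix.charpoly,
    show ((charmatrix A).det).eval μ = (evalRingHom μ) (charmatrix A).det from rfl,
    RingHom.map_det]
  congr 1
  ext i j
  by_cases h : i = j <;>
    simp [charmatrix_apply, h, Matrix.one_apply, Matrix.diagonal_apply]

lemma root_of_eigen {m : ℕ} {A : Matrix (Fin m) (Fin m) ℝ} {μ : ℝ} {v : Fin m → ℝ}
    (hv : v ≠ 0) (hAv : A *ᵥ v = μ • v) : (A.charpoly).eval μ = 0 := by
  rw [eval_charpoly_eq]
  rw [← Matrix.exists_mulVec_eq_zero_iff]
  refine ⟨v, hv, ?_⟩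
  rw [Matrix.sub_mulVec, Matrix.smul_mulVec, Matrix.one_mulVec, hAv, sub_self]

set_option maxHeartbeats 1000000
/-- Lemma 2 of the paper: any solution `k` of the inverse
eigenvalue problem `σ(K B⁻¹) = {(αᵢ² - 1)⁻¹}`, with the `αᵢ` distinct positive
even integers, satisfies `0 < kᵢ < 1` for all `i`. -/
theorem statement2 (n : ℕ) (hn : 1 ≤ n) (α : Fin n → ℕ)
    (hdist : Function.Injective α) (hpos : ∀ i, 0 < α i) (heven : ∀ i, Even (α i))
    (k : Fin n → ℝ)
    (hspec : (Matrix.diagonal k * (marxB n)⁻¹).charpoly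
      = ∏ i, (Polynomial.X - Polynomial.C (((α i : ℝ) ^ 2 - 1)⁻¹))) :
    ∀ i, 0 < k i ∧ k i < 1 := by
  classical
  set c : Fin n → ℝ := fun j => ((α j : ℝ) ^ 2 - 1)⁻¹ with hcdef
  have hα2 : ∀ j, 2 ≤ α j := by
    intro j
    obtain ⟨m, hm⟩ := heven j
    have := hpos j
    omega
  have hc3 : ∀ j, (3 : ℝ) ≤ (α j : ℝ) ^ 2 - 1 := by
    intro j
    have h2 : (2 : ℝ) ≤ (α j : ℝ) := by exact_mod_cast hα2 j
    nlinarith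
  have hcpos : ∀ j, 0 < c j := fun j => inv_pos.mpr (by linarith [hc3 j])
  have hcle : ∀ j, c j ≤ 1 / 3 := by
    intro j
    rw [hcdef]
    rw [show (1 : ℝ) / 3 = 3⁻¹ by norm_num]
    exact inv_anti₀ (by norm_num) (hc3 j)
  have hB : (marxB n).PosDef := marxB_posDef n hn
  set B := marxB n with hBdef
  set K := Matrix.diagonal k with hKdef
  have hBS : B.PosSemidef := hB.posSemidef
  open scoped MatrixOrder in set S := CFC.sqrt B with hSdef
  have hS : S.PosSemidef := open scoped MatrixOrder in (CFC.sqrt_nonneg B).posSemidef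
  have hSS : S * S = B := open scoped MatrixOrder in CFC.sqrt_mul_sqrt_self B hBS.nonneg
  have hSherm : S.IsHermitian := hS.1
  have hSdet : IsUnit S.det := by
    have hdet : S.det * S.det = B.det := by rw [← Matrix.det_mul, hSS]
    have hBdet : B.det ≠ 0 := hB.det_pos.ne'
    have hSne : S.det ≠ 0 := fun h => hBdet (by rw [← hdet, h, mul_zero])
    exact hSne.isUnit
  have hSunit : IsUnit S := (Matrix.isUnit_iff_isUnit_det _).mpr hSdet
  have hS1 : S * S⁻¹ = 1 := Matrix.mul_nonsing_inv _ hSdet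
  have hS2 : S⁻¹ * S = 1 := Matrix.nonsing_inv_mul _ hSdet
  set M := S⁻¹ * K * S⁻¹ with hMdef
  have hKherm : K.IsHermitian := Matrix.isHermitian_diagonal _
  have hSinvherm : (S⁻¹).IsHermitian := hSherm.inv
  have hMherm : M.IsHermitian := by
    show (S⁻¹ * K * S⁻¹)ᴴ = _
    rw [Matrix.conjTranspose_mul, Matrix.conjTranspose_mul, hSinvherm.eq, hKherm.eq,
      ← mul_assoc]
  have hA_eq : K * B⁻¹ * S = S * M := by
    have hBinv : B⁻¹ = S⁻¹ * S⁻¹ := by rw [← hSS, Matrix.mul_inv_rev]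
    rw [hBinv, hMdef]
    calc K * (S⁻¹ * S⁻¹) * S = K * S⁻¹ * (S⁻¹ * S) := by
          simp only [mul_assoc]
      _ = K * S⁻¹ := by rw [hS2, mul_one]
      _ = (S * S⁻¹) * K * S⁻¹ := by rw [hS1, one_mul]
      _ = S * (S⁻¹ * K * S⁻¹) := by simp only [mul_assoc]
  have hK : S * M * S = K := by
    rw [hMdef]
    calc S * (S⁻¹ * K * S⁻¹) * S = (S * S⁻¹) * K * (S⁻¹ * S) := by simp only [mul_assoc]
      _ = K := by rw [hS1, hS2, one_mul, mul_one]
  have heig : ∀ (μ : ℝ) (v : Fin n → ℝ), v ≠ 0 → M *ᵥ v = μ • v → ∃ j, μ = c j := by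
    intro μ v hv hMv
    have hu : S *ᵥ v ≠ 0 := by
      intro h0
      exact hv ((Matrix.mulVec_injective_iff_isUnit.mpr hSunit) (by simp [h0]))
    have hAu : (K * B⁻¹) *ᵥ (S *ᵥ v) = μ • (S *ᵥ v) := by
      rw [Matrix.mulVec_mulVec, hA_eq, ← Matrix.mulVec_mulVec, hMv, Matrix.mulVec_smul]
    have hroot := root_of_eigen hu hAu
    rw [hspec] at hroot
    simp only [eval_prod, eval_sub, eval_X, eval_C] at hroot
    obtain ⟨j, -, hj⟩ := Finset.prod_eq_zero_iff.mp hroot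
    exact ⟨j, by linarith [sub_eq_zero.mp hj]⟩
  intro i
  haveI : Nonempty (Fin n) := ⟨i⟩
  set cmin := Finset.univ.inf' Finset.univ_nonempty c with hcmin
  have hcminpos : 0 < cmin := (Finset.lt_inf'_iff _).mpr fun j _ => hcpos j
  have hcminle : ∀ j, cmin ≤ c j := fun j => Finset.inf'_le _ (Finset.mem_univ j)
  have hsmulherm : ∀ r : ℝ, (r • (1 : Matrix (Fin n) (Fin n) ℝ)).IsHermitian := by
    intro r
    show _ᴴ = _
    simp
  have key : ∀ (H : Matrix (Fin n) (Fin n) ℝ), H.IsHermitian →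
      (∀ (μ : ℝ) (v : Fin n → ℝ), v ≠ 0 → H *ᵥ v = μ • v → 0 ≤ μ) → H.PosSemidef := by
    intro H hherm hbound
    refine hherm.posSemidef_iff_eigenvalues_nonneg.mpr fun t => ?_
    have hvne : (⇑(hherm.eigenvectorBasis t) : Fin n → ℝ) ≠ 0 := by
      have := hherm.eigenvectorBasis.toBasis.ne_zero t
      simpa using this
    exact hbound _ _ hvne (hherm.mulVec_eigenvectorBasis t)
  have hsubeig : ∀ (r μ : ℝ) (v : Fin n → ℝ), ((M - r • 1) *ᵥ v = μ • v) →
      M *ᵥ v = (μ + r) • v := by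
    intro r μ v h
    have h1 : (M - r • 1) *ᵥ v = M *ᵥ v - r • v := by
      rw [Matrix.sub_mulVec, Matrix.smul_mulVec, Matrix.one_mulVec]
    rw [h1] at h
    rw [add_smul, ← h]
    abel
  have hP1 : (M - cmin • 1).PosSemidef := by
    refine key _ (hMherm.sub (hsmulherm cmin)) fun μ v hv hMv => ?_
    obtain ⟨j, hj⟩ := heig _ _ hv (hsubeig _ _ _ hMv)
    have := hcminle j
    linarith
  have hP2 : ((1 / 3 : ℝ) • 1 - M).PosSemidef := by
    have hherm : ((1 / 3 : ℝ) • 1 - M).IsHermitian := (hsmulherm (1/3)).sub hMherm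
    refine key _ hherm fun μ v hv hMv => ?_
    have h1 : ((1 / 3 : ℝ) • 1 - M) *ᵥ v = (1/3 : ℝ) • v - M *ᵥ v := by
      rw [Matrix.sub_mulVec, Matrix.smul_mulVec, Matrix.one_mulVec]
    rw [h1] at hMv
    have h2 : M *ᵥ v = (1/3 - μ) • v := by
      rw [sub_smul, ← hMv]
      abel
    obtain ⟨j, hj⟩ := heig _ _ hv h2
    have := hcle j
    linarith
  have hdiag : ∀ {Q : Matrix (Fin n) (Fin n) ℝ}, Q.PosSemidef → ∀ t, 0 ≤ Q t t := by
    intro Q hQ t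
    exact hQ.diag_nonneg
  have hQ1 : (K - cmin • B).PosSemidef := by
    have h := hP1.mul_mul_conjTranspose_same S
    have heq : S * (M - cmin • 1) * Sᴴ = K - cmin • B := by
      rw [hSherm.eq, Matrix.mul_sub, Matrix.sub_mul, hK, Matrix.mul_smul, Matrix.smul_mul,
        mul_one, hSS]
    rwa [heq] at h
  have hQ2 : ((1 / 3 : ℝ) • B - K).PosSemidef := by
    have h := hP2.mul_mul_conjTranspose_same S
    have heq : S * ((1 / 3 : ℝ) • 1 - M) * Sᴴ = (1 / 3 : ℝ) • B - K := by
      rw [hSherm.eq, Matrix.mul_sub, Matrix.sub_mul, hK, Matrix.mul_smul, Matrix.smul_mul,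
        mul_one, hSS]
    rwa [heq] at h
  have hBval : B i i = if (i : ℕ) = n - 1 then ((n : ℝ) + 1) / n else 2 := by
    rw [hBdef]; simp [marxB]
  have hn1 : (1 : ℝ) ≤ n := by exact_mod_cast hn
  have hBpos : 0 < B i i := by
    rw [hBval]
    split_ifs
    · positivity
    · norm_num
  have hBle : B i i ≤ 2 := by
    rw [hBval]
    split_ifs
    · rw [div_le_iff₀ (by linarith)]; linarith
    · exact le_rfl
  have h1 := hdiag hQ1 i
  have h2 := hdiag hQ2 i
  rw [Matrix.sub_apply, Matrix.smul_apply, hKdef, Matrix.diagonal_apply_eq, smul_eq_mul] at h1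
  rw [Matrix.sub_apply, Matrix.smul_apply, hKdef, Matrix.diagonal_apply_eq, smul_eq_mul] at h2
  refine ⟨?_, ?_⟩
  · nlinarith [mul_pos hcminpos hBpos]
  · linarith

end
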